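/- With μ, ν, κ, q as above (Re(μ±ν) > 0, κ = √(μ²-ν²), q = ν/(μ+κ)), one has |q| < 1. -/

import Mathlib

open Complex

lemma exists_sqrt_pos_re (z : ℂ) (hz : 0 < z.re) :
    ∃ s : ℂ, s ^ 2 = z ∧ |s.im| < s.re := by
  have hz0 : z ≠ 0 := fun h => by simp [h] at hz
  obtain ⟨w, hw⟩ : ∃ w : ℂ, w ^ 2 = z := IsAlgClosed.exists_pow_nat_eq z two_pos
  have hre : w.im ^ 2 < w.re ^ 2 := by
    have : (w ^ 2).re = w.re ^ 2 - w.im ^ 2 := by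
      simp [pow_two, Complex.mul_re]
    rw [hw] at this
    nlinarith
  have habs : |w.im| < |w.re| := by
    rw [← Real.sqrt_sq_eq_abs, ← Real.sqrt_sq_eq_abs]
    exact Real.sqrt_lt_sqrt (sq_nonneg _) hre
  rcases lt_or_ge 0 w.re with h | h
  · exact ⟨w, hw, by rwa [abs_of_pos h] at habs⟩
  · refine ⟨-w, by rw [neg_pow]; simpa using hw, ?_⟩
    have : |w.re| = -w.re := abs_of_nonpos h
    simpa [this] using habs

/-- With `Re(μ±ν) > 0`, `κ = √(μ²-ν²)` (branch with `Re κ > 0`) and `q = ν/(μ+κ)`,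
one has `|q| < 1`. -/
theorem gaussian_ratio_lt_one (μ ν κ : ℂ)
    (hp : 0 < (μ + ν).re) (hm : 0 < (μ - ν).re)
    (hκ : κ ^ 2 = μ ^ 2 - ν ^ 2) (hκre : 0 < κ.re) :
    ‖ν / (μ + κ)‖ < 1 := by
  obtain ⟨s, hs, hs3⟩ := exists_sqrt_pos_re (μ + ν) hp
  obtain ⟨t, ht, ht3⟩ := exists_sqrt_pos_re (μ - ν) hm
  have hsre : 0 < s.re := lt_of_le_of_lt (abs_nonneg _) hs3
  have htre : 0 < t.re := lt_of_le_of_lt (abs_nonneg _) ht3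
  have hmul : |s.im| * |t.im| < s.re * t.re :=
    mul_lt_mul'' hs3 ht3 (abs_nonneg _) (abs_nonneg _)
  have hmul' : |s.im * t.im| < s.re * t.re := by rwa [abs_mul]
  have h1 : s.im * t.im < s.re * t.re := lt_of_le_of_lt (le_abs_self _) hmul'
  have h2 : -(s.im * t.im) < s.re * t.re := lt_of_le_of_lt (neg_le_abs _) hmul'
  -- κ = s * t
  have hsq : (s * t) ^ 2 = κ ^ 2 := by
    rw [mul_pow, hs, ht, hκ]; ring
  have hst : κ = s * t := by
    have hfac : (κ - s * t) * (κ + s * t) = 0 := by linear_combination hsq.symm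
    rcases mul_eq_zero.mp hfac with h | h
    · exact sub_eq_zero.mp h
    · exfalso
      have : κ = -(s * t) := by linear_combination h
      have hre : κ.re = -(s.re * t.re - s.im * t.im) := by
        rw [this]; simp [Complex.mul_re]
      rw [hre] at hκre; linarith
  have hν : ν = (s ^ 2 - t ^ 2) / 2 := by
    linear_combination (ht - hs) / 2
  have hμκ : μ + κ = (s + t) ^ 2 / 2 := by
    rw [hst]
    linear_combination (-hs - ht) / 2
  have hstne : s + t ≠ 0 := by
    intro h
    have : (s + t).re = 0 := by rw [h]; simp
    simp [Complex.add_re] at this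
    linarith
  have hquot : ν / (μ + κ) = (s - t) / (s + t) := by
    have h2 : ((s + t) ^ 2 : ℂ) ≠ 0 := pow_ne_zero _ hstne
    rw [hν, hμκ]
    field_simp
    ring
  rw [hquot, norm_div]
  have habs : ‖s - t‖ < ‖s + t‖ := by
    rw [Complex.norm_def, Complex.norm_def]
    apply Real.sqrt_lt_sqrt (Complex.normSq_nonneg _)
    simp only [Complex.normSq_apply, Complex.sub_re, Complex.sub_im,
      Complex.add_re, Complex.add_im]
    nlinarith
  have hpos : 0 < ‖s + t‖ := by
    simpa using (norm_pos_iff.mpr hstne)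
  rw [div_lt_one hpos]
  exact habs
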